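/- Cone membership for the weighted Group Lasso: let a ∈ (0,1) and λ > 0, let β̂ be any global minimizer over ℝ^p of β ↦ ℓ(β) + λ Σ_{k=1}^r ‖W_k β_k‖₂, and suppose |W⁻¹Xᵀε|_∞ ≤ aλ (i.e. |x_jᵀε| ≤ aλ·w_j for all j). Then β̂ − β̊ belongs to the cone C_{a,W}. -/

import Mathlib

open scoped BigOperators

/-- Weighted group ℓ₂ norm ‖W_k β_k‖₂ of the subvector of `β` on group `G`. -/
noncomputable def gnorm {p : ℕ} (w β : Fin p → ℝ) (G : Finset (Fin p)) : ℝ :=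
  Real.sqrt (∑ j ∈ G, (w j * β j) ^ 2)

/-- Quadratic loss ℓ(β) = ‖Xβ‖₂²/2 − yᵀXβ. -/
noncomputable def qloss {n p : ℕ} (X : Matrix (Fin n) (Fin p) ℝ) (y : Fin n → ℝ)
    (β : Fin p → ℝ) : ℝ :=
  (∑ i, (X.mulVec β i) ^ 2) / 2 - ∑ i, y i * X.mulVec β i

/-- The cone C_{a,W}:
Σ_{k∈S̄} ‖W_k v_k‖ ≤ Σ_{k∈S} ‖W_k v_k‖ + a |Wv|₁. -/
def inCone {p r : ℕ} (w : Fin p → ℝ) (G : Fin r → Finset (Fin p))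
    (S : Finset (Fin r)) (a : ℝ) (v : Fin p → ℝ) : Prop :=
  ∑ k ∈ Sᶜ, gnorm w v (G k) ≤ ∑ k ∈ S, gnorm w v (G k) + a * ∑ j, |w j * v j|

lemma gnorm_eq {p : ℕ} (w β : Fin p → ℝ) (G : Finset (Fin p)) :
    gnorm w β G =
      ‖(WithLp.equiv 2 (Fin p → ℝ)).symm (fun j => if j ∈ G then w j * β j else 0)‖ := by
  rw [gnorm, EuclideanSpace.norm_eq]
  congr 1
  rw [← Finset.sum_subset (Finset.subset_univ G)
      (fun j _ hj => by simp [hj])]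
  exact Finset.sum_congr rfl fun j hj => by
    rw [WithLp.equiv_symm_apply, WithLp.ofLp_toLp]; simp only [hj, if_true, Real.norm_eq_abs, sq_abs]

lemma gnorm_add_le {p : ℕ} (w β γ : Fin p → ℝ) (G : Finset (Fin p)) :
    gnorm w (β + γ) G ≤ gnorm w β G + gnorm w γ G := by
  rw [gnorm_eq, gnorm_eq, gnorm_eq]
  have h : (fun j => if j ∈ G then w j * (β + γ) j else 0)
      = (fun j => if j ∈ G then w j * β j else 0) + (fun j => if j ∈ G then w j * γ j else 0) := by
    funext j; by_cases hj : j ∈ G <;> simp [hj] <;> ring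
  rw [h, WithLp.equiv_symm_apply, WithLp.toLp_add]
  exact norm_add_le _ _


/-- Cone membership for the weighted Group Lasso: if |W⁻¹Xᵀε|_∞ ≤ aλ then any global
minimizer β̂ of the Group Lasso objective satisfies β̂ − β̊ ∈ C_{a,W}. -/
theorem stmt1 {n p r : ℕ} (hn : 0 < n) (hp : 0 < p) (hr : 0 < r)
    (X : Matrix (Fin n) (Fin p) ℝ)
    (G : Fin r → Finset (Fin p))
    (hGne : ∀ k, (G k).Nonempty)
    (hGdisj : ∀ k₁ k₂, k₁ ≠ k₂ → Disjoint (G k₁) (G k₂))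
    (hGcover : ∀ j, ∃ k, j ∈ G k)
    (w : Fin p → ℝ) (hw : ∀ j, 0 < w j)
    (βo : Fin p → ℝ) (ε : Fin n → ℝ) (y : Fin n → ℝ)
    (hy : y = X.mulVec βo + ε)
    (S : Finset (Fin r)) (hS : ∀ k, k ∈ S ↔ ∃ j ∈ G k, βo j ≠ 0)
    (a : ℝ) (ha : a ∈ Set.Ioo (0 : ℝ) 1)
    (lam : ℝ) (hlam : 0 < lam)
    (hnoise : ∀ j, |∑ i, X i j * ε i| ≤ a * lam * w j)
    (βh : Fin p → ℝ)
    (hmin : ∀ β : Fin p → ℝ,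
      qloss X y βh + lam * ∑ k, gnorm w βh (G k) ≤
        qloss X y β + lam * ∑ k, gnorm w β (G k)) :
    inCone w G S a (βh - βo) := by
  obtain ⟨ha0, ha1⟩ := ha
  subst hy
  set T : ℝ := ∑ j, |w j * (βh - βo) j| with hT
  -- Step 1: bound the loss difference by the inner product with the noise
  have hsub : ∀ i, X.mulVec βh i - X.mulVec βo i = ∑ j, X i j * (βh j - βo j) := by
    intro i
    simp only [Matrix.mulVec, dotProduct, mul_sub, ← Finset.sum_sub_distrib]
  have hq : qloss X (X.mulVec βo + ε) βo - qloss X (X.mulVec βo + ε) βh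
      = ∑ i, (ε i * (X.mulVec βh i - X.mulVec βo i)
          - (X.mulVec βh i - X.mulVec βo i) ^ 2 / 2) := by
    unfold qloss
    rw [Finset.sum_div, Finset.sum_div]
    simp only [← Finset.sum_sub_distrib, Pi.add_apply]
    exact Finset.sum_congr rfl fun i _ => by ring
  have key1 : qloss X (X.mulVec βo + ε) βo - qloss X (X.mulVec βo + ε) βh
      ≤ ∑ j, (∑ i, X i j * ε i) * (βh j - βo j) := by
    rw [hq]
    have h1 : ∑ i, (ε i * (X.mulVec βh i - X.mulVec βo i)
        - (X.mulVec βh i - X.mulVec βo i) ^ 2 / 2)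
        ≤ ∑ i, ε i * (X.mulVec βh i - X.mulVec βo i) := by
      apply Finset.sum_le_sum
      intro i _
      nlinarith [sq_nonneg (X.mulVec βh i - X.mulVec βo i)]
    have h2 : ∑ i, ε i * (X.mulVec βh i - X.mulVec βo i)
        = ∑ j, (∑ i, X i j * ε i) * (βh j - βo j) := by
      simp only [hsub, Finset.mul_sum, Finset.sum_mul]
      rw [Finset.sum_comm]
      exact Finset.sum_congr rfl fun i _ => Finset.sum_congr rfl fun j _ => by ring
    linarith [h1, h2.ge, h2.le]
  -- Step 2: bound the inner product
  have key2 : ∑ j, (∑ i, X i j * ε i) * (βh j - βo j) ≤ a * lam * T := by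
    rw [hT, Finset.mul_sum]
    apply Finset.sum_le_sum
    intro j _
    have habs : |w j * (βh - βo) j| = w j * |βh j - βo j| := by
      rw [abs_mul, abs_of_pos (hw j)]; rfl
    calc (∑ i, X i j * ε i) * (βh j - βo j)
        ≤ |(∑ i, X i j * ε i) * (βh j - βo j)| := le_abs_self _
      _ = |∑ i, X i j * ε i| * |βh j - βo j| := abs_mul _ _
      _ ≤ (a * lam * w j) * |βh j - βo j| :=
          mul_le_mul_of_nonneg_right (hnoise j) (abs_nonneg _)
      _ = a * lam * |w j * (βh - βo) j| := by rw [habs]; ring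
  -- Step 3: group norm facts
  have hbar : ∀ k ∈ Sᶜ, gnorm w βo (G k) = 0 ∧ gnorm w βh (G k) = gnorm w (βh - βo) (G k) := by
    intro k hk
    have h0 : ∀ j ∈ G k, βo j = 0 := by
      intro j hj
      by_contra hne
      exact (Finset.mem_compl.mp hk) ((hS k).mpr ⟨j, hj, hne⟩)
    constructor
    · rw [gnorm, Finset.sum_eq_zero (fun j hj => by rw [h0 j hj]; ring), Real.sqrt_zero]
    · unfold gnorm
      congr 1
      exact Finset.sum_congr rfl fun j hj => by rw [Pi.sub_apply, h0 j hj]; ring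
  have hins : ∀ k, gnorm w βo (G k) - gnorm w (βh - βo) (G k) ≤ gnorm w βh (G k) := by
    intro k
    have h1 : gnorm w βo (G k) ≤ gnorm w βh (G k) + gnorm w (βo - βh) (G k) := by
      have := gnorm_add_le w βh (βo - βh) (G k)
      rwa [show βh + (βo - βh) = βo from by funext j; simp] at this
    have h2 : gnorm w (βo - βh) (G k) = gnorm w (βh - βo) (G k) := by
      unfold gnorm
      congr 1
      exact Finset.sum_congr rfl fun j hj => by simp only [Pi.sub_apply]; ring
    linarith
  -- Step 4: sum splitting
  have E1 : ∑ k, gnorm w βo (G k) = ∑ k ∈ S, gnorm w βo (G k) := by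
    rw [← Finset.sum_add_sum_compl S, Finset.sum_eq_zero (fun k hk => (hbar k hk).1), add_zero]
  have E2 : ∑ k, gnorm w βh (G k)
      = ∑ k ∈ S, gnorm w βh (G k) + ∑ k ∈ Sᶜ, gnorm w (βh - βo) (G k) := by
    rw [← Finset.sum_add_sum_compl S]
    congr 1
    exact Finset.sum_congr rfl fun k hk => (hbar k hk).2
  have E3 : ∑ k ∈ S, gnorm w βo (G k) - ∑ k ∈ S, gnorm w (βh - βo) (G k)
      ≤ ∑ k ∈ S, gnorm w βh (G k) := by
    rw [← Finset.sum_sub_distrib]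
    exact Finset.sum_le_sum fun k _ => hins k
  -- Conclude
  have hm := hmin βo
  rw [inCone]
  have hfinal : lam * (∑ k ∈ Sᶜ, gnorm w (βh - βo) (G k))
      ≤ lam * (∑ k ∈ S, gnorm w (βh - βo) (G k) + a * T) := by
    nlinarith [hm, key1, key2, E1, E2, E3]
  have := le_of_mul_le_mul_left hfinal hlam
  linarith
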